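/- Let N ≥ 2 and let μ_∞ be a Haar measure on SL_N(ℝ). There exist constants c, C > 0 such that for every ε ∈ (0,1], c·ε^{N²−1} ≤ μ_∞({g ∈ SL_N(ℝ) : max_{i,j} |g_{ij} − δ_{ij}| ≤ ε}) ≤ C·ε^{N²−1}, where δ_{ij} is the Kronecker delta (so the set is the ε-ball around the identity matrix in the sup norm, intersected with SL_N(ℝ)). -/

import Mathlib

open MeasureTheory

instance {m n α : Type*} [MeasurableSpace α] : MeasurableSpace (Matrix m n α) :=
  inferInstanceAs (MeasurableSpace (m → n → α))

/-- `μ` is a Haar measure on `SL_N(ℝ)`, viewed as a measure on the ambient matrix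
space supported on `{det = 1}`. -/
def IsHaarOnSL {N : ℕ} (μ : Measure (Matrix (Fin N) (Fin N) ℝ)) : Prop :=
  μ {x | x.det ≠ 1} = 0 ∧
  (∀ g : Matrix (Fin N) (Fin N) ℝ, g.det = 1 →
    ∀ A : Set (Matrix (Fin N) (Fin N) ℝ), MeasurableSet A →
      μ ((fun x => g * x) ⁻¹' A) = μ A) ∧
  (∀ U : Set (Matrix (Fin N) (Fin N) ℝ), IsOpen U →
    (U ∩ {x | x.det = 1}).Nonempty → 0 < μ U) ∧
  (∀ C : Set (Matrix (Fin N) (Fin N) ℝ), IsCompact C → μ C < ⊤)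

/-! ### Auxiliary material -/

namespace Statement10Aux

variable {N : ℕ} (i0 : Fin N)

instance : BorelSpace (Matrix (Fin N) (Fin N) ℝ) :=
  inferInstanceAs (BorelSpace (Fin N → Fin N → ℝ))

abbrev E (N : ℕ) : Type := Fin N → Fin N → ℝ

def oneE (N : ℕ) : E N := (1 : Matrix (Fin N) (Fin N) ℝ)

/-! #### Algebraic layer -/

noncomputable def d0 (x : Matrix (Fin N) (Fin N) ℝ) : ℝ :=
  (x.updateRow i0 (Function.update (x i0) i0 0)).det

noncomputable def cof (x : Matrix (Fin N) (Fin N) ℝ) : ℝ :=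
  (x.updateRow i0 (Pi.single i0 1)).det

def upd (x : Matrix (Fin N) (Fin N) ℝ) (a : ℝ) : Matrix (Fin N) (Fin N) ℝ :=
  x.updateRow i0 (Function.update (x i0) i0 a)

lemma upd_apply (x : Matrix (Fin N) (Fin N) ℝ) (a : ℝ) (i j : Fin N) :
    upd i0 x a i j = if i = i0 ∧ j = i0 then a else x i j := by
  rw [upd, Matrix.updateRow_apply]
  by_cases hi : i = i0 <;> by_cases hj : j = i0 <;>
    simp [hi, hj, Function.update_apply]

lemma d0_congr {x y : Matrix (Fin N) (Fin N) ℝ}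
    (h : ∀ i j, ¬(i = i0 ∧ j = i0) → x i j = y i j) : d0 i0 x = d0 i0 y := by
  unfold d0
  congr 1
  funext i j
  rw [Matrix.updateRow_apply, Matrix.updateRow_apply]
  by_cases hi : i = i0
  · rw [if_pos hi, if_pos hi, Function.update_apply, Function.update_apply]
    by_cases hj : j = i0
    · rw [if_pos hj, if_pos hj]
    · rw [if_neg hj, if_neg hj]
      exact h i0 j (fun hc => hj hc.2)
  · rw [if_neg hi, if_neg hi]
    exact h i j (fun hc => hi hc.1)

lemma cof_congr {x y : Matrix (Fin N) (Fin N) ℝ}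
    (h : ∀ i j, ¬(i = i0 ∧ j = i0) → x i j = y i j) : cof i0 x = cof i0 y := by
  unfold cof
  congr 1
  funext i j
  rw [Matrix.updateRow_apply, Matrix.updateRow_apply]
  by_cases hi : i = i0
  · rw [if_pos hi, if_pos hi]
  · rw [if_neg hi, if_neg hi]
    exact h i j (fun hc => hi hc.1)

lemma det_decomp (x : Matrix (Fin N) (Fin N) ℝ) :
    x.det = d0 i0 x + x i0 i0 * cof i0 x := by
  have h1 : x i0 = Function.update (x i0) i0 0 + (x i0 i0) • (Pi.single i0 1 : Fin N → ℝ) := by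
    funext j
    by_cases hj : j = i0 <;> simp [hj, Function.update_apply]
  conv_lhs => rw [← x.updateRow_eq_self i0, h1]
  rw [Matrix.det_updateRow_add, Matrix.det_updateRow_smul]
  rfl

lemma upd_eq_off (x : Matrix (Fin N) (Fin N) ℝ) (a : ℝ) :
    ∀ i j, ¬(i = i0 ∧ j = i0) → upd i0 x a i j = x i j := by
  intro i j hij
  rw [upd_apply, if_neg hij]

lemma upd_corner (x : Matrix (Fin N) (Fin N) ℝ) (a : ℝ) : upd i0 x a i0 i0 = a := by
  rw [upd_apply]; simp

lemma det_upd (x : Matrix (Fin N) (Fin N) ℝ) (a : ℝ) :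
    (upd i0 x a).det = d0 i0 x + a * cof i0 x := by
  rw [det_decomp i0 (upd i0 x a), upd_corner,
    d0_congr i0 (upd_eq_off i0 x a), cof_congr i0 (upd_eq_off i0 x a)]

lemma cof_one : cof i0 (1 : Matrix (Fin N) (Fin N) ℝ) = 1 := by
  unfold cof
  have h : (1 : Matrix (Fin N) (Fin N) ℝ).updateRow i0 (Pi.single i0 1) = 1 := by
    funext i j
    rw [Matrix.updateRow_apply]
    by_cases hi : i = i0
    · rw [if_pos hi, hi, Pi.single_apply, Matrix.one_apply]
      simp [eq_comm]
    · rw [if_neg hi]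
  rw [h, Matrix.det_one]

lemma d0_one : d0 i0 (1 : Matrix (Fin N) (Fin N) ℝ) = 0 := by
  unfold d0
  apply Matrix.det_eq_zero_of_row_eq_zero i0
  intro j
  rw [Matrix.updateRow_self, Function.update_apply]
  by_cases hj : j = i0
  · simp [hj]
  · rw [if_neg hj, Matrix.one_apply, if_neg (fun h => hj h.symm)]

noncomputable def fc (x : Matrix (Fin N) (Fin N) ℝ) : ℝ := (1 - d0 i0 x) / cof i0 x

lemma fc_one : fc i0 (1 : Matrix (Fin N) (Fin N) ℝ) = 1 := by
  rw [fc, d0_one, cof_one]; norm_num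

lemma fc_congr {x y : Matrix (Fin N) (Fin N) ℝ}
    (h : ∀ i j, ¬(i = i0 ∧ j = i0) → x i j = y i j) : fc i0 x = fc i0 y := by
  rw [fc, fc, d0_congr i0 h, cof_congr i0 h]

lemma det_upd_fc {x : Matrix (Fin N) (Fin N) ℝ} (h : cof i0 x ≠ 0) :
    (upd i0 x (fc i0 x)).det = 1 := by
  rw [det_upd, fc]; field_simp; ring

lemma corner_eq_fc {x : Matrix (Fin N) (Fin N) ℝ} (h : cof i0 x ≠ 0) (hd : x.det = 1) :
    x i0 i0 = fc i0 x := by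
  rw [fc]
  rw [det_decomp i0 x] at hd
  field_simp
  linarith

/-! #### Calculus layer -/

theorem contDiff_det' : ContDiff ℝ 1 (fun x : E N => (Matrix.of x).det) := by
  have h : (fun x : E N => (Matrix.of x).det)
      = fun x => ∑ σ : Equiv.Perm (Fin N), (Equiv.Perm.sign σ : ℝ) * ∏ i, x (σ i) i := by
    funext x
    rw [Matrix.det_apply]
    simp [Units.smul_def, zsmul_eq_mul]
  rw [h]
  refine ContDiff.sum fun σ _ => ContDiff.mul contDiff_const ?_
  refine contDiff_prod fun i _ => ?_
  exact ContinuousLinearMap.contDiff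
    ((ContinuousLinearMap.proj i : (Fin N → ℝ) →L[ℝ] ℝ).comp
      (ContinuousLinearMap.proj (σ i) : (E N) →L[ℝ] (Fin N → ℝ)))

lemma contDiff_coord (i j : Fin N) : ContDiff ℝ 1 (fun x : E N => x i j) :=
  ContinuousLinearMap.contDiff
    ((ContinuousLinearMap.proj j : (Fin N → ℝ) →L[ℝ] ℝ).comp
      (ContinuousLinearMap.proj i : (E N) →L[ℝ] (Fin N → ℝ)))

lemma contDiff_d0E : ContDiff ℝ 1 (fun x : E N => d0 i0 (Matrix.of x)) := by
  have h : (fun x : E N => d0 i0 (Matrix.of x)) = fun x : E N =>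
      (Matrix.of (fun i j => if i = i0 then (if j = i0 then 0 else x i j) else x i j)).det := by
    funext x
    unfold d0
    congr 1
    funext i j
    rw [Matrix.updateRow_apply]
    simp only [Matrix.of_apply]
    by_cases hi : i = i0
    · rw [if_pos hi, if_pos hi, Function.update_apply]
      by_cases hj : j = i0 <;> simp [hj, hi]
    · rw [if_neg hi, if_neg hi]
  rw [h]
  exact (contDiff_det' (N := N)).comp <| contDiff_pi.2 fun i => contDiff_pi.2 fun j => by
    by_cases hi : i = i0
    · by_cases hj : j = i0
      · simpa [hi, hj] using contDiff_const (c := (0:ℝ))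
      · simpa [hi, hj] using contDiff_coord i j
    · simpa [hi] using contDiff_coord i j

lemma contDiff_cofE : ContDiff ℝ 1 (fun x : E N => cof i0 (Matrix.of x)) := by
  have h : (fun x : E N => cof i0 (Matrix.of x)) = fun x : E N =>
      (Matrix.of (fun i j => if i = i0 then (if j = i0 then (1:ℝ) else 0) else x i j)).det := by
    funext x
    unfold cof
    congr 1
    funext i j
    rw [Matrix.updateRow_apply]
    simp only [Matrix.of_apply]
    by_cases hi : i = i0
    · rw [if_pos hi, if_pos hi, Pi.single_apply]
    · rw [if_neg hi, if_neg hi]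
  rw [h]
  exact (contDiff_det' (N := N)).comp <| contDiff_pi.2 fun i => contDiff_pi.2 fun j => by
    by_cases hi : i = i0
    · by_cases hj : j = i0 <;> simp [hi, hj, contDiff_const]
    · simpa [hi] using contDiff_coord i j

lemma dist_le_of_entries {x y : E N} {t : ℝ} (ht : 0 ≤ t)
    (h : ∀ i j, |x i j - y i j| ≤ t) : dist x y ≤ t := by
  refine (dist_pi_le_iff ht).2 fun i => (dist_pi_le_iff ht).2 fun j => ?_
  rw [Real.dist_eq]
  exact h i j

lemma exists_good : ∃ r₀ L : ℝ, 0 < r₀ ∧ r₀ ≤ 1 ∧ 1 ≤ L ∧ r₀ * (L + 1) ≤ 1 ∧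
    (∀ x : Matrix (Fin N) (Fin N) ℝ,
      (∀ i j, |x i j - (1 : Matrix (Fin N) (Fin N) ℝ) i j| ≤ r₀) → cof i0 x ≠ 0) ∧
    (∀ x y : Matrix (Fin N) (Fin N) ℝ,
      (∀ i j, |x i j - (1 : Matrix (Fin N) (Fin N) ℝ) i j| ≤ r₀) →
      (∀ i j, |y i j - (1 : Matrix (Fin N) (Fin N) ℝ) i j| ≤ r₀) →
      ∀ t : ℝ, 0 ≤ t → (∀ i j, |x i j - y i j| ≤ t) → |fc i0 x - fc i0 y| ≤ L * t) := by
  classical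
  have hcof1 : cof i0 (1 : Matrix (Fin N) (Fin N) ℝ) = 1 := cof_one i0
  have hfcE : ContDiffAt ℝ 1 (fun x : E N => fc i0 (Matrix.of x)) (oneE N) := by
    refine ContDiffAt.div ?_ ?_ ?_
    · exact (contDiff_const.sub (contDiff_d0E i0)).contDiffAt
    · exact (contDiff_cofE i0).contDiffAt
    · show cof i0 (Matrix.of (oneE N)) ≠ 0
      rw [show Matrix.of (oneE N) = (1 : Matrix (Fin N) (Fin N) ℝ) from rfl, hcof1]
      norm_num
  obtain ⟨K, s, hs, hK⟩ := hfcE.exists_lipschitzOnWith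
  obtain ⟨ε₁, hε₁, hball⟩ := Metric.mem_nhds_iff.1 hs
  have hcofcont : ContinuousAt (fun x : E N => cof i0 (Matrix.of x)) (oneE N) :=
    (contDiff_cofE i0).continuous.continuousAt
  obtain ⟨ε₂, hε₂, hcof⟩ := Metric.continuousAt_iff.1 hcofcont (1/2) (by norm_num)
  set L : ℝ := (K : ℝ) + 1 with hL
  have hLpos : 1 ≤ L := by rw [hL]; linarith [NNReal.coe_nonneg K]
  set r₀ : ℝ := min (min (ε₁/2) (ε₂/2)) (min 1 (1/(L+1))) with hr₀
  have hr₀pos : 0 < r₀ := by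
    apply lt_min (lt_min (by linarith) (by linarith)) (lt_min one_pos (by positivity))
  have hr₀1 : r₀ ≤ 1 := le_trans (min_le_right _ _) (min_le_left _ _)
  have hr₀L : r₀ * (L + 1) ≤ 1 := by
    have h1 : r₀ ≤ 1/(L+1) := le_trans (min_le_right _ _) (min_le_right _ _)
    have h2 : (0:ℝ) < L + 1 := by linarith
    calc r₀ * (L+1) ≤ (1/(L+1)) * (L+1) := by nlinarith
    _ = 1 := by field_simp
  have hmem : ∀ x : Matrix (Fin N) (Fin N) ℝ,
      (∀ i j, |x i j - (1 : Matrix (Fin N) (Fin N) ℝ) i j| ≤ r₀) →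
      dist (Matrix.of.symm x) (oneE N) ≤ r₀ := by
    intro x hx
    exact dist_le_of_entries hr₀pos.le hx
  refine ⟨r₀, L, hr₀pos, hr₀1, hLpos, hr₀L, ?_, ?_⟩
  · intro x hx
    have h1 : dist (Matrix.of.symm x) (oneE N) < ε₂ := by
      calc dist (Matrix.of.symm x) (oneE N) ≤ r₀ := hmem x hx
      _ ≤ ε₂/2 := le_trans (min_le_left _ _) (min_le_right _ _)
      _ < ε₂ := by linarith
    have h2 := hcof h1
    rw [Real.dist_eq] at h2
    have h3 : cof i0 (Matrix.of (Matrix.of.symm x)) = cof i0 x := rfl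
    have h4 : cof i0 (Matrix.of (oneE N)) = 1 := by
      rw [show Matrix.of (oneE N) = (1 : Matrix (Fin N) (Fin N) ℝ) from rfl, hcof1]
    rw [h3, h4] at h2
    intro hc
    rw [hc] at h2
    norm_num at h2
  · intro x y hx hy t ht hxy
    have hmx : (Matrix.of.symm x) ∈ s := by
      apply hball
      rw [Metric.mem_ball]
      calc dist (Matrix.of.symm x) (oneE N) ≤ r₀ := hmem x hx
      _ ≤ ε₁/2 := le_trans (min_le_left _ _) (min_le_left _ _)
      _ < ε₁ := by linarith
    have hmy : (Matrix.of.symm y) ∈ s := by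
      apply hball
      rw [Metric.mem_ball]
      calc dist (Matrix.of.symm y) (oneE N) ≤ r₀ := hmem y hy
      _ ≤ ε₁/2 := le_trans (min_le_left _ _) (min_le_left _ _)
      _ < ε₁ := by linarith
    have hd := hK.dist_le_mul _ hmx _ hmy
    rw [Real.dist_eq] at hd
    have hdxy : dist (Matrix.of.symm x) (Matrix.of.symm y) ≤ t := dist_le_of_entries ht hxy
    calc |fc i0 x - fc i0 y|
        = |fc i0 (Matrix.of (Matrix.of.symm x)) - fc i0 (Matrix.of (Matrix.of.symm y))| := rfl
      _ ≤ K * dist (Matrix.of.symm x) (Matrix.of.symm y) := hd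
      _ ≤ K * t := by
          apply mul_le_mul_of_nonneg_left hdxy (NNReal.coe_nonneg K)
      _ ≤ L * t := by
          apply mul_le_mul_of_nonneg_right _ ht
          rw [hL]
          linarith

/-! #### Norm-type bounds -/

lemma exists_inv_bound : ∃ Ci : ℝ, 1 ≤ Ci ∧ ∀ x : Matrix (Fin N) (Fin N) ℝ, x.det = 1 →
    (∀ i j, |x i j| ≤ 2) → ∀ i j, |x⁻¹ i j| ≤ Ci := by
  classical
  set K2 : Set (E N) := Set.univ.pi fun _ => Set.univ.pi fun _ => Set.Icc (-2:ℝ) 2 with hK2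
  have hcomp : IsCompact K2 := isCompact_univ_pi fun _ => isCompact_univ_pi fun _ => isCompact_Icc
  have hcont : Continuous (fun x : E N => Matrix.of.symm ((Matrix.of x).adjugate)) := by
    exact Continuous.matrix_adjugate (continuous_id)
  obtain ⟨C, hC⟩ := hcomp.exists_bound_of_continuousOn
    (f := fun x : E N => Matrix.of.symm ((Matrix.of x).adjugate)) hcont.continuousOn
  refine ⟨max C 1, le_max_right _ _, fun x hdet hx i j => ?_⟩
  have hxK : (x : E N) ∈ K2 := by
    rw [hK2]
    refine Set.mem_univ_pi.2 fun i => Set.mem_univ_pi.2 fun j => ?_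
    exact abs_le.1 (hx i j)
  have hinv : x⁻¹ = x.adjugate := by
    rw [Matrix.inv_def, hdet]
    simp
  rw [hinv]
  have h1 : ‖(Matrix.of.symm x.adjugate)‖ ≤ C := hC x hxK
  have h2 : |x.adjugate i j| ≤ ‖(Matrix.of.symm x.adjugate)‖ := by
    calc |x.adjugate i j| = ‖(Matrix.of.symm x.adjugate) i j‖ := rfl
    _ ≤ ‖(Matrix.of.symm x.adjugate) i‖ := norm_le_pi_norm _ j
    _ ≤ ‖(Matrix.of.symm x.adjugate)‖ := norm_le_pi_norm _ i
  exact le_trans (le_trans h2 h1) (le_max_left _ _)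

lemma mul_entry_bound {g b : Matrix (Fin N) (Fin N) ℝ} {R s : ℝ}
    (hg : ∀ i j, |g i j| ≤ R) (hb : ∀ i j, |b i j| ≤ s) :
    ∀ i j, |(g * b) i j| ≤ N * R * s := by
  intro i j
  rw [Matrix.mul_apply]
  calc |∑ k, g i k * b k j| ≤ ∑ k, |g i k * b k j| := Finset.abs_sum_le_sum_abs _ _
    _ ≤ ∑ _k : Fin N, R * s := by
        refine Finset.sum_le_sum fun k _ => ?_
        rw [abs_mul]
        exact mul_le_mul (hg i k) (hb k j) (abs_nonneg _) (le_trans (abs_nonneg _) (hg i k))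
    _ = N * R * s := by
        rw [Finset.sum_const, Finset.card_univ, Fintype.card_fin]
        ring

lemma one_entry_abs (i j : Fin N) : |(1 : Matrix (Fin N) (Fin N) ℝ) i j| ≤ 1 := by
  rw [Matrix.one_apply]
  by_cases h : i = j <;> simp [h]

/-! #### Topology / measurability -/

lemma isCompact_entries (R : ℝ) :
    IsCompact {x : Matrix (Fin N) (Fin N) ℝ | ∀ i j, |x i j| ≤ R} := by
  have h : {x : E N | ∀ i j, |x i j| ≤ R}
      = Set.univ.pi fun _ => Set.univ.pi fun _ => Set.Icc (-R) R := by
    ext x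
    simp only [Set.mem_setOf_eq, Set.mem_univ_pi, Set.mem_Icc]
    constructor
    · intro hx i j
      exact abs_le.1 (hx i j)
    · intro hx i j
      exact abs_le.2 (hx i j)
  have h2 : IsCompact {x : E N | ∀ i j, |x i j| ≤ R} := by
    rw [h]
    exact isCompact_univ_pi fun _ => isCompact_univ_pi fun _ => isCompact_Icc
  exact h2

lemma continuous_entry (i j : Fin N) :
    Continuous (fun x : Matrix (Fin N) (Fin N) ℝ => x i j) :=
  Continuous.matrix_elem continuous_id i j

lemma measurableSet_SLB (ε : ℝ) :
    MeasurableSet {g : Matrix (Fin N) (Fin N) ℝ |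
      g.det = 1 ∧ ∀ i j, |g i j - (1 : Matrix (Fin N) (Fin N) ℝ) i j| ≤ ε} := by
  have h1 : IsClosed {g : Matrix (Fin N) (Fin N) ℝ | g.det = 1} :=
    isClosed_singleton.preimage (Continuous.matrix_det continuous_id)
  have h2 : IsClosed {g : Matrix (Fin N) (Fin N) ℝ |
      ∀ i j, |g i j - (1 : Matrix (Fin N) (Fin N) ℝ) i j| ≤ ε} := by
    have heq : {g : Matrix (Fin N) (Fin N) ℝ |
        ∀ i j, |g i j - (1 : Matrix (Fin N) (Fin N) ℝ) i j| ≤ ε}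
        = ⋂ i, ⋂ j, {g : Matrix (Fin N) (Fin N) ℝ |
            |g i j - (1 : Matrix (Fin N) (Fin N) ℝ) i j| ≤ ε} := by
      ext g
      simp [Set.mem_iInter]
    rw [heq]
    refine isClosed_iInter fun i => isClosed_iInter fun j => ?_
    exact isClosed_le (((continuous_entry i j).sub continuous_const).abs) continuous_const
  exact (h1.inter h2).measurableSet

lemma measurable_mulLeft (g : Matrix (Fin N) (Fin N) ℝ) :
    Measurable (fun x : Matrix (Fin N) (Fin N) ℝ => g * x) :=
  (Continuous.matrix_mul continuous_const continuous_id).measurable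

/-! #### Group facts -/

lemma det_inv_one {g : Matrix (Fin N) (Fin N) ℝ} (h : g.det = 1) : g⁻¹.det = 1 := by
  rw [Matrix.det_nonsing_inv, h]
  simp

lemma inv_mul_cancel_left' {g x : Matrix (Fin N) (Fin N) ℝ} (h : g.det = 1) :
    g * (g⁻¹ * x) = x := by
  rw [← Matrix.mul_assoc, Matrix.mul_nonsing_inv g (by rw [h]; exact isUnit_one), Matrix.one_mul]

lemma inv_mul_self' {g : Matrix (Fin N) (Fin N) ℝ} (h : g.det = 1) : g⁻¹ * g = 1 :=
  Matrix.nonsing_inv_mul g (by rw [h]; exact isUnit_one)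

/-! #### Grid matrices -/

abbrev offIdx (N : ℕ) (i0 : Fin N) := {p : Fin N × Fin N // p ≠ (i0, i0)}

lemma card_offIdx : Fintype.card (offIdx N i0) = N ^ 2 - 1 := by
  have h : Fintype.card {p : Fin N × Fin N // ¬ p = (i0, i0)} =
      Fintype.card (Fin N × Fin N) - Fintype.card {p : Fin N × Fin N // p = (i0, i0)} :=
    Fintype.card_subtype_compl _
  rw [show Fintype.card (offIdx N i0)
      = Fintype.card {p : Fin N × Fin N // ¬ p = (i0, i0)} from rfl, h,
    Fintype.card_subtype_eq]
  simp [sq]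

lemma abs_natCast_sub_ge_one {a b : ℕ} (h : a ≠ b) : (1:ℝ) ≤ |(a:ℝ) - (b:ℝ)| := by
  rcases h.lt_or_gt with h1 | h1
  · have h3 : ((a:ℝ) + 1) ≤ (b:ℝ) := by exact_mod_cast (h1 : a + 1 ≤ b)
    rw [abs_sub_comm, abs_of_nonneg (by linarith)]
    linarith
  · have h3 : ((b:ℝ) + 1) ≤ (a:ℝ) := by exact_mod_cast (h1 : b + 1 ≤ a)
    rw [abs_of_nonneg (by linarith)]
    linarith

lemma pair_eq_iff (i j : Fin N) : (i, j) = (i0, i0) ↔ i = i0 ∧ j = i0 := by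
  constructor
  · intro h
    exact ⟨congrArg Prod.fst h, congrArg Prod.snd h⟩
  · rintro ⟨h1, h2⟩
    rw [h1, h2]

noncomputable def base (y : offIdx N i0 → ℝ) : Matrix (Fin N) (Fin N) ℝ :=
  Matrix.of fun i j =>
    if h : (i, j) = (i0, i0) then 1 else (1 : Matrix (Fin N) (Fin N) ℝ) i j + y ⟨(i, j), h⟩

noncomputable def Gm (y : offIdx N i0 → ℝ) : Matrix (Fin N) (Fin N) ℝ :=
  upd i0 (base i0 y) (fc i0 (base i0 y))

lemma base_close {y : offIdx N i0 → ℝ} {r : ℝ} (hr : 0 ≤ r) (hy : ∀ p, |y p| ≤ r) :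
    ∀ i j, |base i0 y i j - (1 : Matrix (Fin N) (Fin N) ℝ) i j| ≤ r := by
  intro i j
  unfold base
  simp only [Matrix.of_apply]
  by_cases h : (i, j) = (i0, i0)
  · rw [dif_pos h]
    obtain ⟨h1, h2⟩ := (pair_eq_iff i0 i j).1 h
    rw [h1, h2, Matrix.one_apply_eq]
    simpa using hr
  · rw [dif_neg h]
    simpa using hy ⟨(i, j), h⟩

lemma base_off {y : offIdx N i0 → ℝ} {i j : Fin N} (h : (i, j) ≠ (i0, i0)) :
    base i0 y i j = (1 : Matrix (Fin N) (Fin N) ℝ) i j + y ⟨(i, j), h⟩ := by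
  unfold base
  simp only [Matrix.of_apply]
  rw [dif_neg h]

lemma Gm_off {y : offIdx N i0 → ℝ} {i j : Fin N} (h : (i, j) ≠ (i0, i0)) :
    Gm i0 y i j = (1 : Matrix (Fin N) (Fin N) ℝ) i j + y ⟨(i, j), h⟩ := by
  rw [Gm, upd_eq_off i0 _ _ i j (fun hc => h ((pair_eq_iff i0 i j).2 hc)), base_off i0 h]

lemma Gm_corner (y : offIdx N i0 → ℝ) : Gm i0 y i0 i0 = fc i0 (base i0 y) := upd_corner _ _ _

end Statement10Aux

set_option maxHeartbeats 1000000 in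
open Statement10Aux in
/-- The Haar measure of the `ε`-ball (sup norm) around the identity
in `SL_N(ℝ)` is comparable to `ε^{N²-1}`, for `ε ∈ (0,1]`. -/
theorem statement10 (N : ℕ) (hN : 2 ≤ N)
    (μ : Measure (Matrix (Fin N) (Fin N) ℝ)) (hμ : IsHaarOnSL μ) :
    ∃ c C : ℝ, 0 < c ∧ 0 < C ∧ ∀ ε : ℝ, 0 < ε → ε ≤ 1 →
      ENNReal.ofReal (c * ε ^ (N ^ 2 - 1)) ≤
        μ {g | g.det = 1 ∧ ∀ i j, |g i j - (1 : Matrix (Fin N) (Fin N) ℝ) i j| ≤ ε} ∧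
      μ {g | g.det = 1 ∧ ∀ i j, |g i j - (1 : Matrix (Fin N) (Fin N) ℝ) i j| ≤ ε} ≤
        ENNReal.ofReal (C * ε ^ (N ^ 2 - 1)) := by
  classical
  obtain ⟨hnull, hinv, hpos, hfin⟩ := hμ
  have hNpos : 0 < N := by omega
  have hNR : (0:ℝ) < N := by exact_mod_cast hNpos
  set i0 : Fin N := ⟨0, hNpos⟩ with hi0def
  obtain ⟨r₀, L, hr₀, hr₀1, hL1, hr₀L, hcofne, hlip⟩ := exists_good i0
  obtain ⟨Ci, hCi, hinvb⟩ := exists_inv_bound (N := N)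
  set d : ℕ := N ^ 2 - 1 with hd
  have hcard : Fintype.card (offIdx N i0) = d := card_offIdx i0
  have hLr₀ : L * r₀ ≤ 1 := by nlinarith
  -- grid matrix properties
  have hGdet : ∀ y : offIdx N i0 → ℝ, (∀ p, |y p| ≤ r₀) → (Gm i0 y).det = 1 := by
    intro y hy
    exact det_upd_fc i0 (hcofne _ (base_close i0 hr₀.le hy))
  have hGclose : ∀ y : offIdx N i0 → ℝ, (∀ p, |y p| ≤ r₀) →
      ∀ i j, |Gm i0 y i j - (1 : Matrix (Fin N) (Fin N) ℝ) i j| ≤ L * r₀ := by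
    intro y hy i j
    by_cases h : (i, j) = (i0, i0)
    · obtain ⟨h1, h2⟩ := (pair_eq_iff i0 i j).1 h
      subst h1; subst h2
      rw [Gm_corner, Matrix.one_apply_eq, ← fc_one i0]
      exact hlip _ _ (base_close i0 hr₀.le hy) (fun i j => by simp [hr₀.le]) r₀ hr₀.le
        (base_close i0 hr₀.le hy)
    · rw [Gm_off i0 h]
      have := hy ⟨(i, j), h⟩
      have h2 : |(1 : Matrix (Fin N) (Fin N) ℝ) i j + y ⟨(i, j), h⟩
          - (1 : Matrix (Fin N) (Fin N) ℝ) i j| = |y ⟨(i, j), h⟩| := by ring_nf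
      rw [h2]
      nlinarith
  have hGent2 : ∀ y : offIdx N i0 → ℝ, (∀ p, |y p| ≤ r₀) →
      ∀ i j, |Gm i0 y i j| ≤ 2 := by
    intro y hy i j
    have h1 := hGclose y hy i j
    have h2 := one_entry_abs i j
    calc |Gm i0 y i j| = |(Gm i0 y i j - (1 : Matrix (Fin N) (Fin N) ℝ) i j)
        + (1 : Matrix (Fin N) (Fin N) ℝ) i j| := by ring_nf
    _ ≤ |Gm i0 y i j - (1 : Matrix (Fin N) (Fin N) ℝ) i j|
        + |(1 : Matrix (Fin N) (Fin N) ℝ) i j| := abs_add_le _ _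
    _ ≤ 2 := by linarith
  have hGinv : ∀ y : offIdx N i0 → ℝ, (∀ p, |y p| ≤ r₀) →
      ∀ i j, |(Gm i0 y)⁻¹ i j| ≤ Ci := by
    intro y hy
    exact hinvb _ (hGdet y hy) (hGent2 y hy)
  -- constants
  set C₁ : ℝ := 2 * N with hC₁
  have hC₁pos : (0:ℝ) < C₁ := by rw [hC₁]; positivity
  set V : ENNReal := μ {x : Matrix (Fin N) (Fin N) ℝ | ∀ i j, |x i j| ≤ 2 + C₁} with hV
  have hVfin : V < ⊤ := hfin _ (isCompact_entries _)
  set U : Set (Matrix (Fin N) (Fin N) ℝ) :=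
    {x | ∀ i j, |x i j - (1 : Matrix (Fin N) (Fin N) ℝ) i j| < r₀} with hU
  have hUopen : IsOpen U := by
    have heq : U = ⋂ i, ⋂ j, {x : Matrix (Fin N) (Fin N) ℝ |
        |x i j - (1 : Matrix (Fin N) (Fin N) ℝ) i j| < r₀} := by
      ext x; simp [hU, Set.mem_iInter]
    rw [heq]
    refine isOpen_iInter_of_finite fun i => isOpen_iInter_of_finite fun j => ?_
    exact isOpen_lt (((continuous_entry i j).sub continuous_const).abs) continuous_const
  have hUpos : 0 < μ U := by
    refine hpos U hUopen ⟨1, fun i j => by simpa using hr₀, by simp⟩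
  have hUsub : U ⊆ {x : Matrix (Fin N) (Fin N) ℝ | ∀ i j, |x i j| ≤ 2 + C₁} := by
    intro x hx i j
    have h1 := le_of_lt (hx i j)
    have h2 := one_entry_abs i j
    calc |x i j| = |(x i j - (1 : Matrix (Fin N) (Fin N) ℝ) i j)
        + (1 : Matrix (Fin N) (Fin N) ℝ) i j| := by ring_nf
    _ ≤ |x i j - (1 : Matrix (Fin N) (Fin N) ℝ) i j|
        + |(1 : Matrix (Fin N) (Fin N) ℝ) i j| := abs_add_le _ _
    _ ≤ 2 + C₁ := by linarith
  have hUfin : μ U < ⊤ := lt_of_le_of_lt (measure_mono hUsub) hVfin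
  set β : ℝ := 2 * r₀ * N * Ci * L + 1 with hβ
  have hβpos : (0:ℝ) < β := by rw [hβ]; positivity
  set c : ℝ := (μ U).toReal / β ^ d with hc
  set C : ℝ := (3 * C₁ / r₀) ^ d * (V.toReal + 1) with hC
  have hUt : 0 < (μ U).toReal := ENNReal.toReal_pos hUpos.ne' hUfin.ne
  have hcpos : 0 < c := by rw [hc]; positivity
  have hCpos : 0 < C := by
    rw [hC]
    have := ENNReal.toReal_nonneg (a := V)
    positivity
  refine ⟨c, C, hcpos, hCpos, fun ε hε hε1 => ⟨?_, ?_⟩⟩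
  · -- LOWER BOUND
    set B : Set (Matrix (Fin N) (Fin N) ℝ) :=
      {g | g.det = 1 ∧ ∀ i j, |g i j - (1 : Matrix (Fin N) (Fin N) ℝ) i j| ≤ ε} with hB
    set δ' : ℝ := ε / (N * Ci * L) with hδ'
    have hδ'pos : 0 < δ' := by rw [hδ']; positivity
    set m' : ℕ := ⌊2 * r₀ / δ'⌋₊ + 1 with hm'
    set cK : (offIdx N i0 → Fin m') → offIdx N i0 → ℝ :=
      fun k p => -r₀ + δ' * ((k p : ℕ) : ℝ) with hcK
    have hcKr : ∀ k p, |cK k p| ≤ r₀ := by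
      intro k p
      have h1 : ((k p : ℕ) : ℝ) ≤ (⌊2 * r₀ / δ'⌋₊ : ℝ) := by
        exact_mod_cast Nat.lt_succ_iff.1 (k p).isLt
      have h2 : (⌊2 * r₀ / δ'⌋₊ : ℝ) ≤ 2 * r₀ / δ' := Nat.floor_le (by positivity)
      have h3 : (0:ℝ) ≤ δ' * ((k p : ℕ) : ℝ) := by positivity
      have h4 : δ' * ((k p : ℕ) : ℝ) ≤ 2 * r₀ := by
        calc δ' * ((k p : ℕ) : ℝ) ≤ δ' * (2 * r₀ / δ') := by nlinarith
        _ = 2 * r₀ := by field_simp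
      have hval : cK k p = -r₀ + δ' * ((k p : ℕ) : ℝ) := rfl
      rw [hval, abs_le]
      constructor
      · nlinarith
      · nlinarith
    set A : (offIdx N i0 → Fin m') → Set (Matrix (Fin N) (Fin N) ℝ) :=
      fun k => (fun x => (Gm i0 (cK k))⁻¹ * x) ⁻¹' B with hA
    have hAmu : ∀ k, μ (A k) = μ B := fun k =>
      hinv _ (det_inv_one (hGdet _ (hcKr k))) _ (measurableSet_SLB ε)
    -- covering
    have hcover : U ∩ {x : Matrix (Fin N) (Fin N) ℝ | x.det = 1}
        ⊆ ⋃ k ∈ (Finset.univ : Finset (offIdx N i0 → Fin m')), A k := by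
      rintro x ⟨hxU, hxdet⟩
      have hxU' : ∀ i j, |x i j - (1 : Matrix (Fin N) (Fin N) ℝ) i j| < r₀ := hxU
      have hxdom : ∀ i j, |x i j - (1 : Matrix (Fin N) (Fin N) ℝ) i j| ≤ r₀ :=
        fun i j => (hxU' i j).le
      -- the cell of x
      have hkbound : ∀ p : offIdx N i0,
          ⌊(x p.1.1 p.1.2 - (1 : Matrix (Fin N) (Fin N) ℝ) p.1.1 p.1.2 + r₀) / δ'⌋₊ < m' := by
        intro p
        have h1 : x p.1.1 p.1.2 - (1 : Matrix (Fin N) (Fin N) ℝ) p.1.1 p.1.2 + r₀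
            ≤ 2 * r₀ := by
          have h2 := (abs_le.1 (hxdom p.1.1 p.1.2)).2
          linarith
        have h2 : (x p.1.1 p.1.2 - (1 : Matrix (Fin N) (Fin N) ℝ) p.1.1 p.1.2 + r₀) / δ'
            ≤ 2 * r₀ / δ' := by gcongr
        rw [hm']
        exact Nat.lt_succ_iff.2 (Nat.floor_mono h2)
      set k : offIdx N i0 → Fin m' := fun p =>
        ⟨⌊(x p.1.1 p.1.2 - (1 : Matrix (Fin N) (Fin N) ℝ) p.1.1 p.1.2 + r₀) / δ'⌋₊, hkbound p⟩
        with hk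
      -- off-corner entries are δ'-close
      have hoff : ∀ (i j : Fin N) (h : (i, j) ≠ (i0, i0)),
          |x i j - ((1 : Matrix (Fin N) (Fin N) ℝ) i j + cK k ⟨(i, j), h⟩)| ≤ δ' := by
        intro i j h
        set t : ℝ := x i j - (1 : Matrix (Fin N) (Fin N) ℝ) i j + r₀ with ht
        have ht0 : 0 ≤ t := by
          have := (abs_le.1 (hxdom i j)).1
          rw [ht]; linarith
        have hf1 : (⌊t / δ'⌋₊ : ℝ) ≤ t / δ' := Nat.floor_le (by positivity)
        have hf2 : t / δ' < (⌊t / δ'⌋₊ : ℝ) + 1 := Nat.lt_floor_add_one _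
        have hval : cK k ⟨(i, j), h⟩ = -r₀ + δ' * (⌊t / δ'⌋₊ : ℝ) := by
          rw [hcK, hk]
        have hg1 : δ' * (⌊t / δ'⌋₊ : ℝ) ≤ t := by
          calc δ' * (⌊t / δ'⌋₊ : ℝ) ≤ δ' * (t / δ') := by nlinarith
          _ = t := by field_simp
        have hg2 : t ≤ δ' * ((⌊t / δ'⌋₊ : ℝ) + 1) := by
          calc t = δ' * (t / δ') := by field_simp
          _ ≤ δ' * ((⌊t / δ'⌋₊ : ℝ) + 1) := by nlinarith
        rw [hval, abs_le]
        constructor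
        · nlinarith [ht.symm.le, ht.le]
        · nlinarith [ht.symm.le, ht.le]
      -- all entries are L·δ'-close to Gm (cK k)
      have hGx : ∀ i j, |x i j - Gm i0 (cK k) i j| ≤ L * δ' := by
        intro i j
        by_cases h : (i, j) = (i0, i0)
        · obtain ⟨h1, h2⟩ := (pair_eq_iff i0 i j).1 h
          subst h1; subst h2
          -- corner entry
          have hxc : x i0 i0 = fc i0 x := corner_eq_fc i0 (hcofne x hxdom) hxdet
          rw [Gm_corner, hxc]
          -- x with corner replaced by 1
          set x' : Matrix (Fin N) (Fin N) ℝ := upd i0 x 1 with hx'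
          have hfcx : fc i0 x = fc i0 x' :=
            fc_congr i0 (fun i j hij => (upd_eq_off i0 x 1 i j hij).symm)
          have hx'dom : ∀ i j, |x' i j - (1 : Matrix (Fin N) (Fin N) ℝ) i j| ≤ r₀ := by
            intro i j
            rw [hx', upd_apply]
            by_cases hij : i = i0 ∧ j = i0
            · rw [if_pos hij, hij.1, hij.2, Matrix.one_apply_eq]
              simpa using hr₀.le
            · rw [if_neg hij]
              exact hxdom i j
          have hfar : ∀ i j, |x' i j - base i0 (cK k) i j| ≤ δ' := by
            intro i j
            by_cases hij : (i, j) = (i0, i0)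
            · obtain ⟨h1, h2⟩ := (pair_eq_iff i0 i j).1 hij
              subst h1; subst h2
              rw [hx', upd_corner]
              have hbc : base i0 (cK k) i0 i0 = 1 := by
                unfold base
                simp
              rw [hbc]
              simpa using hδ'pos.le
            · have hij' : ¬(i = i0 ∧ j = i0) := fun hc => hij ((pair_eq_iff i0 i j).2 hc)
              rw [hx', upd_eq_off i0 x 1 i j hij', base_off i0 hij]
              exact hoff i j hij
          have := hlip x' (base i0 (cK k)) hx'dom (base_close i0 hr₀.le (hcKr k)) δ'
            hδ'pos.le hfar
          rw [hfcx]
          exact this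
        · rw [Gm_off i0 h]
          have h1 := hoff i j h
          have h2 : (1:ℝ) ≤ L := hL1
          calc |x i j - ((1 : Matrix (Fin N) (Fin N) ℝ) i j + cK k ⟨(i, j), h⟩)| ≤ δ' := h1
          _ ≤ L * δ' := by nlinarith
      -- conclude x ∈ A k
      have hdet1 := hGdet _ (hcKr k)
      have hbdet : ((Gm i0 (cK k))⁻¹ * x).det = 1 := by
        rw [Matrix.det_mul, det_inv_one hdet1, hxdet, one_mul]
      have hbent : ∀ i j, |((Gm i0 (cK k))⁻¹ * x) i j
          - (1 : Matrix (Fin N) (Fin N) ℝ) i j| ≤ ε := by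
        intro i j
        have heq : (Gm i0 (cK k))⁻¹ * x - 1 = (Gm i0 (cK k))⁻¹ * (x - Gm i0 (cK k)) := by
          rw [Matrix.mul_sub, inv_mul_self' hdet1]
        have hsx : ∀ i' j', |(x - Gm i0 (cK k)) i' j'| ≤ L * δ' := by
          intro i' j'
          rw [Matrix.sub_apply]
          exact hGx i' j'
        have hbound := mul_entry_bound (hGinv _ (hcKr k)) hsx i j
        have hsa : ((Gm i0 (cK k))⁻¹ * x) i j - (1 : Matrix (Fin N) (Fin N) ℝ) i j
            = ((Gm i0 (cK k))⁻¹ * x - 1) i j := (Matrix.sub_apply _ _ _ _).symm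
        rw [hsa, heq]
        calc |((Gm i0 (cK k))⁻¹ * (x - Gm i0 (cK k))) i j| ≤ N * Ci * (L * δ') := hbound
        _ = ε := by
            rw [hδ']
            field_simp
      exact Set.mem_biUnion (Finset.mem_univ k) ⟨hbdet, hbent⟩
    -- counting
    have hμU : μ U ≤ (Fintype.card (offIdx N i0 → Fin m') : ENNReal) * μ B := by
      have h0 : μ U ≤ μ (U ∩ {x : Matrix (Fin N) (Fin N) ℝ | x.det = 1}) := by
        have hsplit : U ⊆ (U ∩ {x : Matrix (Fin N) (Fin N) ℝ | x.det = 1})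
            ∪ {x : Matrix (Fin N) (Fin N) ℝ | x.det ≠ 1} := by
          intro x hx
          by_cases hdx : x.det = 1
          · exact Or.inl ⟨hx, hdx⟩
          · exact Or.inr hdx
        calc μ U ≤ μ ((U ∩ {x : Matrix (Fin N) (Fin N) ℝ | x.det = 1})
            ∪ {x : Matrix (Fin N) (Fin N) ℝ | x.det ≠ 1}) := measure_mono hsplit
        _ ≤ μ (U ∩ {x : Matrix (Fin N) (Fin N) ℝ | x.det = 1})
            + μ {x : Matrix (Fin N) (Fin N) ℝ | x.det ≠ 1} := measure_union_le _ _
        _ = μ (U ∩ {x : Matrix (Fin N) (Fin N) ℝ | x.det = 1}) := by rw [hnull, add_zero]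
      have h1 : μ (U ∩ {x : Matrix (Fin N) (Fin N) ℝ | x.det = 1})
          ≤ μ (⋃ k ∈ (Finset.univ : Finset (offIdx N i0 → Fin m')), A k) :=
        measure_mono hcover
      have h2 : μ (⋃ k ∈ (Finset.univ : Finset (offIdx N i0 → Fin m')), A k)
          ≤ ∑ k ∈ Finset.univ, μ (A k) := measure_biUnion_finset_le _ _
      have h3 : ∑ k ∈ (Finset.univ : Finset (offIdx N i0 → Fin m')), μ (A k)
          = (Fintype.card (offIdx N i0 → Fin m') : ENNReal) * μ B := by
        rw [Finset.sum_congr rfl fun k _ => hAmu k, Finset.sum_const, Finset.card_univ,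
          nsmul_eq_mul]
      exact le_trans h0 (le_trans h1 (le_trans h2 (le_of_eq h3)))
    have hcardm : (Fintype.card (offIdx N i0 → Fin m') : ENNReal) = (m' : ENNReal) ^ d := by
      rw [Fintype.card_fun, Fintype.card_fin, hcard]
      push_cast
      rfl
    have hm'le : (m' : ℝ) ≤ β / ε := by
      have h1 : (m' : ℝ) = (⌊2 * r₀ / δ'⌋₊ : ℝ) + 1 := by rw [hm']; push_cast; ring
      have h2 : (⌊2 * r₀ / δ'⌋₊ : ℝ) ≤ 2 * r₀ / δ' := Nat.floor_le (by positivity)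
      have h3 : 2 * r₀ / δ' = 2 * r₀ * (N * Ci * L) / ε := by
        rw [hδ']
        field_simp
      have h4 : (1:ℝ) ≤ 1 / ε := by
        rw [le_div_iff₀ hε, one_mul]
        exact hε1
      have h5 : 2 * r₀ * ((N:ℝ) * Ci * L) / ε + 1 ≤ β / ε := by
        rw [hβ, add_div]
        have h6 : 2 * r₀ * (N:ℝ) * Ci * L / ε = 2 * r₀ * ((N:ℝ) * Ci * L) / ε := by ring_nf
        rw [h6]
        linarith
      calc (m' : ℝ) = (⌊2 * r₀ / δ'⌋₊ : ℝ) + 1 := h1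
      _ ≤ 2 * r₀ / δ' + 1 := by linarith
      _ = 2 * r₀ * ((N:ℝ) * Ci * L) / ε + 1 := by rw [h3]
      _ ≤ β / ε := h5
    have hcardle : (Fintype.card (offIdx N i0 → Fin m') : ENNReal)
        ≤ ENNReal.ofReal ((β / ε) ^ d) := by
      rw [hcardm, ENNReal.ofReal_pow (by positivity)]
      refine pow_le_pow_left' ?_ d
      calc (m' : ENNReal) = ENNReal.ofReal (m' : ℝ) := (ENNReal.ofReal_natCast m').symm
      _ ≤ ENNReal.ofReal (β / ε) := ENNReal.ofReal_le_ofReal hm'le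
    have ha0 : ENNReal.ofReal ((β/ε)^d) ≠ 0 :=
      (ENNReal.ofReal_pos.2 (by positivity)).ne'
    have hat : ENNReal.ofReal ((β/ε)^d) ≠ ⊤ := ENNReal.ofReal_ne_top
    refine (ENNReal.mul_le_mul_iff_right ha0 hat).1 ?_
    have hkey : ENNReal.ofReal ((β/ε)^d) * ENNReal.ofReal (c * ε ^ d) = μ U := by
      rw [← ENNReal.ofReal_mul (by positivity)]
      have hreal : (β/ε)^d * (c * ε^d) = (μ U).toReal := by
        rw [hc]
        have hstep : (β/ε)^d * ((μ U).toReal / β^d * ε^d)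
            = ((β/ε) * ε)^d / β^d * (μ U).toReal := by
          rw [mul_pow]
          ring
        rw [hstep]
        have hinner : (β/ε) * ε = β := by field_simp
        rw [hinner]
        field_simp
      rw [hreal, ENNReal.ofReal_toReal hUfin.ne]
    rw [hkey]
    calc μ U ≤ (Fintype.card (offIdx N i0 → Fin m') : ENNReal) * μ B := hμU
    _ ≤ ENNReal.ofReal ((β/ε)^d) * μ B := mul_le_mul_left hcardle _
  · -- UPPER BOUND
    set B : Set (Matrix (Fin N) (Fin N) ℝ) :=
      {g | g.det = 1 ∧ ∀ i j, |g i j - (1 : Matrix (Fin N) (Fin N) ℝ) i j| ≤ ε} with hB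
    set δ : ℝ := 3 * C₁ * ε with hδ
    have hδpos : 0 < δ := by rw [hδ]; positivity
    set m : ℕ := ⌊r₀ / δ⌋₊ + 1 with hm
    have hmge : r₀ / δ ≤ (m : ℝ) := by
      rw [hm]; push_cast; exact (Nat.lt_floor_add_one _).le
    set y : (offIdx N i0 → Fin m) → offIdx N i0 → ℝ := fun k p => δ * ((k p : ℕ) : ℝ) with hy
    have hyr : ∀ k p, |y k p| ≤ r₀ := by
      intro k p
      have h1 : ((k p : ℕ) : ℝ) ≤ (⌊r₀ / δ⌋₊ : ℝ) := by
        exact_mod_cast Nat.lt_succ_iff.1 (k p).isLt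
      have h2 : (⌊r₀ / δ⌋₊ : ℝ) ≤ r₀ / δ := Nat.floor_le (by positivity)
      have h3 : (0:ℝ) ≤ δ * ((k p : ℕ) : ℝ) := by positivity
      rw [hy, abs_of_nonneg h3]
      calc δ * ((k p : ℕ) : ℝ) ≤ δ * (r₀ / δ) := by nlinarith
      _ = r₀ := by field_simp
    set A : (offIdx N i0 → Fin m) → Set (Matrix (Fin N) (Fin N) ℝ) :=
      fun k => (fun x => (Gm i0 (y k))⁻¹ * x) ⁻¹' B with hA
    have hAmu : ∀ k, μ (A k) = μ B := fun k =>
      hinv _ (det_inv_one (hGdet _ (hyr k))) _ (measurableSet_SLB ε)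
    have hAmeas : ∀ k, MeasurableSet (A k) := fun k =>
      (measurable_mulLeft _) (measurableSet_SLB ε)
    have hAclose : ∀ k x, x ∈ A k → ∀ i j, |x i j - Gm i0 (y k) i j| ≤ C₁ * ε := by
      intro k x hx i j
      have hx' : ((Gm i0 (y k))⁻¹ * x) ∈ B := hx
      obtain ⟨hbdet, hbe⟩ := hx'
      have hdet1 := hGdet _ (hyr k)
      have hxeq : Gm i0 (y k) * ((Gm i0 (y k))⁻¹ * x) = x := inv_mul_cancel_left' hdet1
      have heq : x - Gm i0 (y k) = Gm i0 (y k) * ((Gm i0 (y k))⁻¹ * x - 1) := by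
        rw [Matrix.mul_sub, Matrix.mul_one, hxeq]
      have hb' : ∀ i' j', |((Gm i0 (y k))⁻¹ * x - 1) i' j'| ≤ ε := by
        intro i' j'
        rw [Matrix.sub_apply]
        exact hbe i' j'
      have hbound := mul_entry_bound (hGent2 _ (hyr k)) hb' i j
      have hsa : x i j - Gm i0 (y k) i j = (x - Gm i0 (y k)) i j := (Matrix.sub_apply _ _ _ _).symm
      rw [hsa, heq]
      calc |(Gm i0 (y k) * ((Gm i0 (y k))⁻¹ * x - 1)) i j| ≤ N * 2 * ε := hbound
      _ = C₁ * ε := by rw [hC₁]; ring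
    have hdisj : Set.PairwiseDisjoint
        (↑(Finset.univ : Finset (offIdx N i0 → Fin m))) A := by
      intro k _ k' _ hkk'
      refine Set.disjoint_left.2 fun x hxk hxk' => ?_
      obtain ⟨p, hp⟩ := Function.ne_iff.1 hkk'
      obtain ⟨⟨i, j⟩, hpp⟩ := p
      have h1 := hAclose k x hxk i j
      have h2 := hAclose k' x hxk' i j
      have h3 : δ ≤ |Gm i0 (y k) i j - Gm i0 (y k') i j| := by
        rw [Gm_off i0 hpp, Gm_off i0 hpp]
        have he : (1 : Matrix (Fin N) (Fin N) ℝ) i j + y k ⟨(i,j),hpp⟩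
            - ((1 : Matrix (Fin N) (Fin N) ℝ) i j + y k' ⟨(i,j),hpp⟩)
            = δ * (((k ⟨(i,j),hpp⟩ : Fin m) : ℝ) - ((k' ⟨(i,j),hpp⟩ : Fin m) : ℝ)) := by
          rw [hy]; ring
        rw [he, abs_mul, abs_of_pos hδpos]
        have hne : ((k ⟨(i,j),hpp⟩ : Fin m) : ℕ) ≠ ((k' ⟨(i,j),hpp⟩ : Fin m) : ℕ) :=
          fun hc => hp (Fin.ext hc)
        have hge := abs_natCast_sub_ge_one hne
        nlinarith
      have h4 : |Gm i0 (y k) i j - Gm i0 (y k') i j|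
          ≤ |Gm i0 (y k) i j - x i j| + |x i j - Gm i0 (y k') i j| := abs_sub_le _ _ _
      rw [abs_sub_comm (Gm i0 (y k) i j) (x i j)] at h4
      rw [hδ] at h3
      nlinarith
    have hsub : ∀ k, A k ⊆ {x : Matrix (Fin N) (Fin N) ℝ | ∀ i j, |x i j| ≤ 2 + C₁} := by
      intro k x hx i j
      have h1 := hAclose k x hx i j
      have h2 := hGent2 _ (hyr k) i j
      have h3 : |x i j| ≤ |x i j - Gm i0 (y k) i j| + |Gm i0 (y k) i j| := by
        calc |x i j| = |(x i j - Gm i0 (y k) i j) + Gm i0 (y k) i j| := by ring_nf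
        _ ≤ _ := abs_add_le _ _
      nlinarith
    have hsum : (Fintype.card (offIdx N i0 → Fin m) : ENNReal) * μ B ≤ V := by
      have h1 : ∑ k ∈ Finset.univ, μ (A k)
          = μ (⋃ k ∈ (Finset.univ : Finset (offIdx N i0 → Fin m)), A k) :=
        (measure_biUnion_finset hdisj fun k _ => hAmeas k).symm
      have h2 : μ (⋃ k ∈ (Finset.univ : Finset (offIdx N i0 → Fin m)), A k) ≤ V :=
        measure_mono (Set.iUnion₂_subset fun k _ => hsub k)
      have h3 : ∑ k ∈ Finset.univ, μ (A k)
          = (Fintype.card (offIdx N i0 → Fin m) : ENNReal) * μ B := by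
        rw [Finset.sum_congr rfl fun k _ => hAmu k, Finset.sum_const, Finset.card_univ,
          nsmul_eq_mul]
      rw [← h3, h1]
      exact h2
    have hcardm : (Fintype.card (offIdx N i0 → Fin m) : ENNReal) = (m : ENNReal) ^ d := by
      rw [Fintype.card_fun, Fintype.card_fin, hcard]
      push_cast
      rfl
    have ha0 : ENNReal.ofReal ((r₀/δ)^d) ≠ 0 :=
      (ENNReal.ofReal_pos.2 (by positivity)).ne'
    have hat : ENNReal.ofReal ((r₀/δ)^d) ≠ ⊤ := ENNReal.ofReal_ne_top
    refine (ENNReal.mul_le_mul_iff_right ha0 hat).1 ?_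
    have hstep1 : ENNReal.ofReal ((r₀/δ)^d) * μ B ≤ (m : ENNReal)^d * μ B := by
      refine mul_le_mul_left ?_ _
      rw [ENNReal.ofReal_pow (by positivity)]
      refine pow_le_pow_left' ?_ d
      calc ENNReal.ofReal (r₀/δ) ≤ ENNReal.ofReal (m:ℝ) := ENNReal.ofReal_le_ofReal hmge
      _ = (m : ENNReal) := ENNReal.ofReal_natCast m
    have hstep2 : (m : ENNReal)^d * μ B ≤ V := by
      rw [← hcardm]
      exact hsum
    have hstep3 : V ≤ ENNReal.ofReal (V.toReal + 1) := by
      conv_lhs => rw [← ENNReal.ofReal_toReal hVfin.ne]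
      exact ENNReal.ofReal_le_ofReal (by linarith)
    have hstep4 : ENNReal.ofReal (V.toReal + 1) = ENNReal.ofReal ((r₀/δ)^d * (C * ε^d)) := by
      congr 1
      rw [hC, hδ]
      have hstep : (r₀/(3*C₁*ε))^d * ((3*C₁/r₀)^d * (V.toReal+1) * ε^d)
          = ((r₀/(3*C₁*ε)) * ((3*C₁/r₀) * ε))^d * (V.toReal+1) := by
        rw [mul_pow, mul_pow]; ring
      rw [hstep]
      have hinner : (r₀/(3*C₁*ε)) * ((3*C₁/r₀) * ε) = 1 := by
        field_simp
      rw [hinner, one_pow, one_mul]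
    have hstep5 : ENNReal.ofReal ((r₀/δ)^d * (C * ε^d))
        = ENNReal.ofReal ((r₀/δ)^d) * ENNReal.ofReal (C * ε^d) :=
      ENNReal.ofReal_mul (by positivity)
    exact le_trans hstep1 (le_trans hstep2 (le_trans hstep3
      (le_of_eq (hstep4.trans hstep5))))
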